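/- Define g_t^k(r) := p_t^k(2√r) where p_t^k(r) = ∫_{(0,∞)} (2πs)^{-k/2} e^{-r²/(2s)} dμ(s) for a finite measure μ on (0,∞). Then (d/dr) g_t^k(r) = -4π g_t^{k+2}(r) for all r > 0, and by iteration (d^n/dr^n) g_t^1(r) = (-4π)^n g_t^{1+2n}(r) for all n ≥ 1 and r > 0. -/

import Mathlib

open MeasureTheory

lemma aux_bdd (a c : ℝ) (ha : 0 ≤ a) (hc : 0 < c) :
    ∃ C : ℝ, ∀ s : ℝ, 0 < s → s ^ (-a) * Real.exp (-(c/s)) ≤ C := by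
  set m : ℕ := ⌈a⌉₊ with hm
  refine ⟨max 1 (m.factorial * c ^ (-(m:ℝ))), fun s hs => ?_⟩
  rcases le_or_gt 1 s with h1 | h1
  · refine le_trans ?_ (le_max_left _ _)
    have h2 : s ^ (-a) ≤ 1 := Real.rpow_le_one_of_one_le_of_nonpos h1 (by linarith)
    have h3 : Real.exp (-(c/s)) ≤ 1 := Real.exp_le_one_iff.2 (neg_nonpos.2 (by positivity))
    calc s ^ (-a) * Real.exp (-(c/s)) ≤ 1 * 1 :=
      mul_le_mul h2 h3 (Real.exp_pos _).le zero_le_one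
    _ = 1 := by ring
  · refine le_trans ?_ (le_max_right _ _)
    have hsm : s ^ (-a) ≤ s ^ (-(m:ℝ)) :=
      Real.rpow_le_rpow_of_exponent_ge hs h1.le (neg_le_neg (Nat.le_ceil a))
    have hx : 0 < c / s := by positivity
    have hexp : Real.exp (-(c/s)) ≤ m.factorial * (c/s) ^ (-(m:ℝ)) := by
      rw [Real.exp_neg, Real.rpow_neg hx.le, Real.rpow_natCast]
      calc (Real.exp (c/s))⁻¹ ≤ ((c/s)^m / m.factorial)⁻¹ :=
        inv_anti₀ (by positivity) (Real.pow_div_factorial_le_exp (x := c/s) hx.le m)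
      _ = m.factorial * ((c/s)^m)⁻¹ := by rw [inv_div, div_eq_mul_inv]
    calc s ^ (-a) * Real.exp (-(c/s))
        ≤ s ^ (-(m:ℝ)) * ((m.factorial : ℝ) * (c/s) ^ (-(m:ℝ))) :=
          mul_le_mul hsm hexp (Real.exp_pos _).le (Real.rpow_nonneg hs.le _)
      _ = m.factorial * c ^ (-(m:ℝ)) := by
          have hsp : (0:ℝ) < s ^ (-(m:ℝ)) := Real.rpow_pos_of_pos hs _
          rw [Real.div_rpow hc.le hs.le]
          field_simp

lemma main_deriv (μ : Measure ℝ) [IsFiniteMeasure μ] (k : ℕ) (r : ℝ) (hr : 0 < r) :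
    HasDerivAt (fun x => ∫ s in Set.Ioi (0:ℝ),
        (2*Real.pi*s)^(-(k:ℝ)/2) * Real.exp (-(2*x/s)) ∂μ)
      (∫ s in Set.Ioi (0:ℝ),
        (2*Real.pi*s)^(-(k:ℝ)/2) * (-(2/s) * Real.exp (-(2*r/s))) ∂μ) r := by
  set ν := μ.restrict (Set.Ioi (0:ℝ)) with hν
  have hmeasF : ∀ x : ℝ, Measurable fun s : ℝ =>
      (2*Real.pi*s)^(-(k:ℝ)/2) * Real.exp (-(2*x/s)) := by
    intro x
    fun_prop
  have hmeasF' : Measurable fun s : ℝ =>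
      (2*Real.pi*s)^(-(k:ℝ)/2) * (-(2/s) * Real.exp (-(2*r/s))) := by
    fun_prop
  obtain ⟨C₀, hC₀⟩ := aux_bdd ((k:ℝ)/2) (2*r) (by positivity) (by positivity)
  obtain ⟨C₁, hC₁⟩ := aux_bdd ((k:ℝ)/2 + 1) r (by positivity) hr
  have hπ : (0:ℝ) < 2*Real.pi := by positivity
  have key := hasDerivAt_integral_of_dominated_loc_of_deriv_le (μ := ν)
    (F := fun x s => (2*Real.pi*s)^(-(k:ℝ)/2) * Real.exp (-(2*x/s)))
    (F' := fun x s => (2*Real.pi*s)^(-(k:ℝ)/2) * (-(2/s) * Real.exp (-(2*x/s))))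
    (x₀ := r) (s := Metric.ball r (r/2))
    (bound := fun _ => 2 * (2*Real.pi)^(-(k:ℝ)/2) * max C₁ 0)
    (Metric.ball_mem_nhds r (by positivity))
    (Filter.Eventually.of_forall fun x => (hmeasF x).aestronglyMeasurable)
    ?_ ?_ ?_ (integrable_const _) ?_
  · exact key.2
  · -- Integrable (F r) ν
    refine Integrable.mono' (integrable_const ((2*Real.pi)^(-(k:ℝ)/2) * max C₀ 0))
      (hmeasF r).aestronglyMeasurable ?_
    filter_upwards [ae_restrict_mem measurableSet_Ioi] with s hs
    have hs' : (0:ℝ) < s := hs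
    have h2πs : (0:ℝ) < 2*Real.pi*s := by positivity
    rw [Real.norm_eq_abs, abs_mul, abs_of_nonneg (Real.rpow_nonneg h2πs.le _), Real.abs_exp]
    have hsplit : (2*Real.pi*s)^(-(k:ℝ)/2) = (2*Real.pi)^(-(k:ℝ)/2) * s^(-(k:ℝ)/2) :=
      Real.mul_rpow hπ.le hs'.le
    rw [hsplit, mul_assoc]
    refine mul_le_mul_of_nonneg_left ?_ (Real.rpow_nonneg hπ.le _)
    have harg : -(2*r/s) = -((2*r)/s) := by ring
    rw [harg, neg_div]
    exact (hC₀ s hs').trans (le_max_left _ _)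
  · exact hmeasF'.aestronglyMeasurable
  · -- bound
    filter_upwards [ae_restrict_mem measurableSet_Ioi] with s hs
    intro x hx
    have hs' : (0:ℝ) < s := hs
    have h2πs : (0:ℝ) < 2*Real.pi*s := by positivity
    have hxr : r/2 < x := by
      have := abs_sub_lt_iff.1 (mem_ball_iff_norm.1 hx)
      linarith [this.2]
    have hnorm : ‖(2*Real.pi*s)^(-(k:ℝ)/2) * (-(2/s) * Real.exp (-(2*x/s)))‖
        = (2*Real.pi*s)^(-(k:ℝ)/2) * ((2/s) * Real.exp (-(2*x/s))) := by
      rw [Real.norm_eq_abs, abs_mul, abs_of_nonneg (Real.rpow_nonneg h2πs.le _),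
        abs_mul, abs_neg, Real.abs_exp, abs_div, abs_two, abs_of_pos hs']
    rw [hnorm]
    have hexple : Real.exp (-(2*x/s)) ≤ Real.exp (-(r/s)) := by
      apply Real.exp_le_exp.2
      rw [neg_le_neg_iff]
      gcongr
      linarith
    calc (2*Real.pi*s)^(-(k:ℝ)/2) * ((2/s) * Real.exp (-(2*x/s)))
        ≤ (2*Real.pi*s)^(-(k:ℝ)/2) * ((2/s) * Real.exp (-(r/s))) :=
          mul_le_mul_of_nonneg_left
            (mul_le_mul_of_nonneg_left hexple (by positivity))
            (Real.rpow_nonneg h2πs.le _)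
      _ = 2*(2*Real.pi)^(-(k:ℝ)/2) * (s^(-((k:ℝ)/2+1)) * Real.exp (-(r/s))) := by
          rw [Real.mul_rpow hπ.le hs'.le,
            show -((k:ℝ)/2+1) = -(k:ℝ)/2 + (-1) by ring, Real.rpow_add hs',
            Real.rpow_neg_one]
          field_simp
      _ ≤ 2*(2*Real.pi)^(-(k:ℝ)/2) * max C₁ 0 :=
          mul_le_mul_of_nonneg_left ((hC₁ s hs').trans (le_max_left _ _)) (by positivity)
  · -- differentiability
    filter_upwards [ae_restrict_mem measurableSet_Ioi] with s hs
    intro x hx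
    have hs' : (0:ℝ) < s := hs
    have hd : HasDerivAt (fun y : ℝ => -(2*y/s)) (-(2/s)) x := by
      have h := (hasDerivAt_id x).const_mul (-(2/s))
      simp only [mul_one] at h
      exact h.congr_of_eventuallyEq (Filter.Eventually.of_forall fun y => by simp only [id_eq]; ring)
    have := (hd.exp).const_mul ((2*Real.pi*s)^(-(k:ℝ)/2))
    exact this.congr_deriv (by ring)


/-- Let `p^k(r) = ∫_{(0,∞)} (2πs)^{-k/2} e^{-r²/(2s)} dμ(s)` for a finite measure `μ` on
`(0,∞)` and set `g^k(r) = p^k(2√r)`. Then `(d/dr) g^k(r) = -4π g^{k+2}(r)` for `r > 0` and,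
by iteration, `(d^n/dr^n) g^1(r) = (-4π)^n g^{1+2n}(r)` for all `n ≥ 1`, `r > 0`. -/
theorem deriv_g_dimension_walk (μ : Measure ℝ) [IsFiniteMeasure μ]
    (p : ℕ → ℝ → ℝ)
    (hp : ∀ k r, p k r = ∫ s in Set.Ioi (0 : ℝ),
      (2 * Real.pi * s) ^ (-(k : ℝ) / 2) * Real.exp (-(r ^ 2 / (2 * s))) ∂μ)
    (g : ℕ → ℝ → ℝ) (hg : ∀ k r, g k r = p k (2 * Real.sqrt r)) :
    (∀ k : ℕ, 1 ≤ k → ∀ r : ℝ, 0 < r →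
        HasDerivAt (g k) (-(4 * Real.pi) * g (k + 2) r) r) ∧
    (∀ n : ℕ, 1 ≤ n → ∀ r : ℝ, 0 < r →
        iteratedDerivWithin n (g 1) (Set.Ioi 0) r = (-(4 * Real.pi)) ^ n * g (1 + 2 * n) r) := by
  have heq : ∀ (k : ℕ) (x : ℝ), 0 < x → g k x =
      ∫ s in Set.Ioi (0:ℝ), (2*Real.pi*s)^(-(k:ℝ)/2) * Real.exp (-(2*x/s)) ∂μ := by
    intro k x hx
    rw [hg, hp]
    refine setIntegral_congr_fun measurableSet_Ioi fun s hs => ?_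
    have hs' : (0:ℝ) < s := hs
    have h4 : (2*Real.sqrt x)^2 = 4*x := by
      rw [mul_pow, Real.sq_sqrt hx.le]; ring
    rw [h4]
    congr 2
    field_simp
    ring
  have part1 : ∀ (k : ℕ) (r : ℝ), 0 < r →
      HasDerivAt (g k) (-(4 * Real.pi) * g (k + 2) r) r := by
    intro k r hr
    have H := main_deriv μ k r hr
    have hmem : Set.Ioi (0:ℝ) ∈ nhds r := isOpen_Ioi.mem_nhds hr
    have hev : g k =ᶠ[nhds r]
        (fun x => ∫ s in Set.Ioi (0:ℝ), (2*Real.pi*s)^(-(k:ℝ)/2) * Real.exp (-(2*x/s)) ∂μ) :=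
      Filter.eventuallyEq_of_mem hmem fun x hx => heq k x hx
    have H2 := H.congr_of_eventuallyEq hev
    have hval : (∫ s in Set.Ioi (0:ℝ),
        (2*Real.pi*s)^(-(k:ℝ)/2) * (-(2/s) * Real.exp (-(2*r/s))) ∂μ)
        = -(4 * Real.pi) * g (k + 2) r := by
      rw [heq (k+2) r hr, ← MeasureTheory.integral_const_mul]
      refine setIntegral_congr_fun measurableSet_Ioi fun s hs => ?_
      have hs' : (0:ℝ) < s := hs
      have h2πs : (0:ℝ) < 2*Real.pi*s := by positivity
      have hcast : -((k+2:ℕ):ℝ)/2 = -(k:ℝ)/2 + (-1) := by push_cast; ring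
      rw [hcast, Real.rpow_add h2πs, Real.rpow_neg_one]
      have hc : -(2/s) = -(4*Real.pi) * (2*Real.pi*s)⁻¹ := by
        field_simp
        ring
      rw [hc]
      ring
    rw [← hval]
    exact H2
  refine ⟨fun k _ r hr => part1 k r hr, ?_⟩
  have hU : UniqueDiffOn ℝ (Set.Ioi (0:ℝ)) := uniqueDiffOn_Ioi 0
  intro n hn
  induction n, hn using Nat.le_induction with
  | base =>
    intro r hr
    rw [iteratedDerivWithin_one, derivWithin_of_isOpen isOpen_Ioi hr,
      (part1 1 r hr).deriv]
    norm_num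
  | succ n hn ih =>
    intro r hr
    rw [iteratedDerivWithin_succ]
    have hEq : Set.EqOn (iteratedDerivWithin n (g 1) (Set.Ioi 0))
        (fun x => (-(4*Real.pi))^n * g (1+2*n) x) (Set.Ioi 0) := fun x hx => ih x hx
    rw [derivWithin_congr hEq (ih r hr), derivWithin_of_isOpen isOpen_Ioi hr]
    have hd := (part1 (1+2*n) r hr).const_mul ((-(4*Real.pi))^n)
    rw [hd.deriv]
    have hidx : 1 + 2*n + 2 = 1 + 2*(n+1) := by ring
    rw [hidx]
    ring
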